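/- Let σ : Y^M → S be I-unambiguous and M-unambiguous for some I ∈ [M], with |Y| = c. Then for any classifier f, R^{01}(f) ≤ min{ (R^{01}_P(f;σ) c^{2I−2} / (1 − (c^{2M−2} R^{01}_P(f;σ))^{1/M})^{M−I})^{1/I}, (c^{2M−2} R^{01}_P(f;σ))^{1/M} }, whenever the inner expression is well-defined; hence R^{01}(f) = O(R^{01}_P(f;σ)^{1/I}) as the partial risk tends to 0. -/

import Mathlib

open scoped ENNReal NNReal
open Finset

private lemma tsum_pi_prod {α : Type*} : ∀ {n : ℕ} (g : Fin n → α → ℝ≥0∞),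
    ∑' w : Fin n → α, ∏ i, g i (w i) = ∏ i, ∑' z, g i z := by
  intro n
  induction n with
  | zero =>
      intro g
      have h1 : ∀ w : Fin 0 → α, (∏ i, g i (w i)) = 1 := fun w => by simp
      simp only [h1]
      rw [tsum_eq_single (fun i => i.elim0) (fun b hb => absurd (Subsingleton.elim b _) hb)]
      simp
  | succ n ih =>
      intro g
      have key : ∑' p : α × (Fin n → α), (∏ i, g i ((Fin.consEquiv fun _ => α) p i))
          = ∑' w : Fin (n+1) → α, ∏ i, g i (w i) :=
        (Fin.consEquiv fun _ => α).tsum_eq (fun w => ∏ i, g i (w i))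
      rw [← key]
      have h2 : ∀ p : α × (Fin n → α), (∏ i, g i ((Fin.consEquiv fun _ => α) p i))
          = g 0 p.1 * ∏ i, g i.succ (p.2 i) := by
        rintro ⟨a, w⟩
        rw [Fin.prod_univ_succ]
        simp [Fin.consEquiv]
      simp only [h2]
      rw [ENNReal.tsum_prod']
      simp only [ENNReal.tsum_mul_left]
      rw [ENNReal.tsum_mul_right, ih, Fin.prod_univ_succ]

private lemma ennreal_pow_sum_le {β : Type*} (s : Finset β) (a : β → ℝ≥0∞)
    (ha : ∀ p ∈ s, a p ≠ ∞) (n : ℕ) (hn : 1 ≤ n) :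
    (∑ p ∈ s, a p) ^ n ≤ (s.card : ℝ≥0∞) ^ (n - 1) * ∑ p ∈ s, (a p) ^ n := by
  obtain ⟨m, rfl⟩ : ∃ m, n = m + 1 := ⟨n - 1, by omega⟩
  have hreal : (∑ p ∈ s, (a p).toNNReal) ^ (m + 1)
      ≤ (s.card : ℝ≥0) ^ m * ∑ p ∈ s, ((a p).toNNReal) ^ (m + 1) :=
    pow_sum_le_card_mul_sum_pow (fun i _ => zero_le) m
  have hsum : (∑ p ∈ s, a p) = ((∑ p ∈ s, (a p).toNNReal : ℝ≥0) : ℝ≥0∞) := by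
    push_cast
    exact Finset.sum_congr rfl fun p hp => (ENNReal.coe_toNNReal (ha p hp)).symm
  have hsum2 : (∑ p ∈ s, (a p) ^ (m+1)) = ((∑ p ∈ s, ((a p).toNNReal) ^ (m+1) : ℝ≥0) : ℝ≥0∞) := by
    push_cast
    exact Finset.sum_congr rfl fun p hp => by
      rw [ENNReal.coe_toNNReal (ha p hp)]
  rw [hsum, hsum2]
  have : (m + 1 : ℕ) - 1 = m := by omega
  rw [this]
  calc ((∑ p ∈ s, (a p).toNNReal : ℝ≥0) : ℝ≥0∞) ^ (m+1)
      = (((∑ p ∈ s, (a p).toNNReal) ^ (m+1) : ℝ≥0) : ℝ≥0∞) := by push_cast; ring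
    _ ≤ (((s.card : ℝ≥0) ^ m * ∑ p ∈ s, ((a p).toNNReal) ^ (m + 1) : ℝ≥0) : ℝ≥0∞) := by
        exact_mod_cast ENNReal.coe_le_coe.mpr hreal
    _ = (s.card : ℝ≥0∞) ^ m * ((∑ p ∈ s, ((a p).toNNReal) ^ (m+1) : ℝ≥0) : ℝ≥0∞) := by
        push_cast; ring

/-- If `σ` is both `I`-unambiguous and `M`-unambiguous, then `R⁰¹(f)` is bounded
by the minimum of `(R_P c^(2I−2) / (1 − (c^(2M−2) R_P)^(1/M))^(M−I))^(1/I)` and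
`(c^(2M−2) R_P)^(1/M)`. -/
theorem stmt4 {X Y S : Type*} [Fintype Y] [DecidableEq Y] [DecidableEq S]
    (c M I : ℕ) (hc : Fintype.card Y = c) (hM : 1 ≤ M) (hI : 1 ≤ I) (hIM : I ≤ M)
    (σ : (Fin M → Y) → S)
    (hσM : ∀ y y' : Y, y ≠ y' → σ (fun _ => y) ≠ σ (fun _ => y'))
    (hσI : ∃ Isub : Finset (Fin M), Isub.card = I ∧
      ∀ (y : Fin M → Y) (l l' : Y), (∀ i ∈ Isub, y i = l) → l' ≠ l →
        σ (fun i => if i ∈ Isub then l' else y i) ≠ σ y)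
    (D : PMF (X × Y)) (f : X → Y)
    (R01 RP : ℝ≥0∞)
    (hR01 : R01 = ∑' z : X × Y, if f z.1 ≠ z.2 then D z else 0)
    (hRP : RP = ∑' w : Fin M → X × Y,
        (∏ i, D (w i)) *
          (if σ (fun i => f (w i).1) ≠ σ (fun i => (w i).2) then 1 else 0))
    (hden : ((c : ℝ≥0∞) ^ (2 * M - 2) * RP) ^ ((M : ℝ)⁻¹) < 1) :
    R01 ≤ min
      ((RP * (c : ℝ≥0∞) ^ (2 * I - 2)
          / (1 - ((c : ℝ≥0∞) ^ (2 * M - 2) * RP) ^ ((M : ℝ)⁻¹)) ^ (M - I)) ^ ((I : ℝ)⁻¹))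
      (((c : ℝ≥0∞) ^ (2 * M - 2) * RP) ^ ((M : ℝ)⁻¹)) := by
  classical
  set B := ((c : ℝ≥0∞) ^ (2 * M - 2) * RP) ^ ((M : ℝ)⁻¹) with hB
  obtain ⟨Isub, hIcard, hflip⟩ := hσI
  haveI : Nonempty (Fin M) := ⟨⟨0, hM⟩⟩
  set P : Finset (Y × Y) := Finset.univ.filter (fun p => p.1 ≠ p.2) with hPdef
  set E : Y × Y → ℝ≥0∞ := fun p => ∑' z : X × Y, if z.2 = p.1 ∧ f z.1 = p.2 then D z else 0
    with hEdef
  set C : ℝ≥0∞ := ∑' z : X × Y, if f z.1 = z.2 then D z else 0 with hCdef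
  -- the key counting lemma
  have key : ∀ T : Finset (Fin M), T.Nonempty →
      (∀ (w : Fin M → X × Y) (p : Y × Y), p ∈ P →
        (∀ i ∈ T, (w i).2 = p.1 ∧ f (w i).1 = p.2) →
        (∀ i ∉ T, f (w i).1 = (w i).2) →
        σ (fun i => f (w i).1) ≠ σ (fun i => (w i).2)) →
      ∑ p ∈ P, E p ^ T.card * C ^ (M - T.card) ≤ RP := by
    intro T hTne hTσ
    set g : Y × Y → Fin M → X × Y → ℝ≥0∞ := fun p i z =>
      if i ∈ T then (if z.2 = p.1 ∧ f z.1 = p.2 then D z else 0)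
      else (if f z.1 = z.2 then D z else 0) with hg
    have h1 : ∀ p ∈ P, E p ^ T.card * C ^ (M - T.card)
        = ∑' w : Fin M → X × Y, ∏ i, g p i (w i) := by
      intro p _
      rw [tsum_pi_prod]
      have hz : ∀ i : Fin M, (∑' z : X × Y, g p i z) = if i ∈ T then E p else C := by
        intro i; by_cases hi : i ∈ T <;> simp [hg, hi, hEdef, hCdef]
      rw [Finset.prod_congr rfl fun i _ => hz i, Finset.prod_ite, Finset.prod_const,
        Finset.prod_const]
      congr 2
      · rw [Finset.filter_mem_eq_inter, Finset.univ_inter]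
      · rw [Finset.filter_not, Finset.filter_mem_eq_inter, Finset.univ_inter,
          Finset.card_sdiff_of_subset (Finset.subset_univ T), Finset.card_univ, Fintype.card_fin]
    have h2 : ∀ w : Fin M → X × Y, (∑ p ∈ P, ∏ i, g p i (w i))
        ≤ (∏ i, D (w i)) *
          (if σ (fun i => f (w i).1) ≠ σ (fun i => (w i).2) then 1 else 0) := by
      intro w
      have hprod : ∀ p : Y × Y, (∏ i, g p i (w i)) =
          if (∀ i ∈ T, (w i).2 = p.1 ∧ f (w i).1 = p.2) ∧ (∀ i ∉ T, f (w i).1 = (w i).2)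
          then ∏ i, D (w i) else 0 := by
        intro p
        by_cases h : (∀ i ∈ T, (w i).2 = p.1 ∧ f (w i).1 = p.2)
            ∧ (∀ i ∉ T, f (w i).1 = (w i).2)
        · rw [if_pos h]
          refine Finset.prod_congr rfl fun i _ => ?_
          by_cases hi : i ∈ T
          · simp [hg, hi, h.1 i hi]
          · simp [hg, hi, h.2 i hi]
        · rw [if_neg h, not_and_or] at *
          rcases h with h | h
          · push_neg at h; obtain ⟨i, hiT, hi⟩ := h
            exact Finset.prod_eq_zero (Finset.mem_univ i) (by simp [hg, hiT]; tauto)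
          · push_neg at h; obtain ⟨i, hiT, hi⟩ := h
            exact Finset.prod_eq_zero (Finset.mem_univ i) (by simp [hg, hiT]; tauto)
      simp only [hprod]
      by_cases hex : ∃ p ∈ P,
          (∀ i ∈ T, (w i).2 = p.1 ∧ f (w i).1 = p.2) ∧ (∀ i ∉ T, f (w i).1 = (w i).2)
      · obtain ⟨p₀, hp₀P, hp₀⟩ := hex
        obtain ⟨i₀, hi₀⟩ := hTne
        have hzero : ∀ p ∈ P, p ≠ p₀ →
            (if (∀ i ∈ T, (w i).2 = p.1 ∧ f (w i).1 = p.2) ∧ (∀ i ∉ T, f (w i).1 = (w i).2)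
             then ∏ i, D (w i) else 0) = 0 := by
          intro p _ hpne
          rw [if_neg]
          rintro ⟨hall, -⟩
          exact hpne (Prod.ext ((hall i₀ hi₀).1.symm.trans (hp₀.1 i₀ hi₀).1)
            ((hall i₀ hi₀).2.symm.trans (hp₀.1 i₀ hi₀).2))
        rw [Finset.sum_eq_single_of_mem p₀ hp₀P hzero, if_pos hp₀,
          if_pos (hTσ w p₀ hp₀P hp₀.1 hp₀.2), mul_one]
      · rw [Finset.sum_eq_zero fun p hp => if_neg fun hcon => hex ⟨p, hp, hcon⟩]
        exact zero_le
    calc ∑ p ∈ P, E p ^ T.card * C ^ (M - T.card)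
        = ∑ p ∈ P, ∑' w : Fin M → X × Y, ∏ i, g p i (w i) := Finset.sum_congr rfl h1
      _ = ∑' w : Fin M → X × Y, ∑ p ∈ P, ∏ i, g p i (w i) :=
          (Summable.tsum_finsetSum fun _ _ => ENNReal.summable).symm
      _ ≤ ∑' w : Fin M → X × Y, (∏ i, D (w i)) *
            (if σ (fun i => f (w i).1) ≠ σ (fun i => (w i).2) then 1 else 0) :=
          ENNReal.tsum_le_tsum h2
      _ = RP := hRP.symm
  -- basic facts
  have hE1 : ∀ p, E p ≤ 1 := by
    intro p
    rw [hEdef]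
    refine le_trans (ENNReal.tsum_le_tsum (fun z => ?_))
      (le_of_eq D.tsum_coe)
    split_ifs
    exacts [le_refl _, zero_le]
  have hEne : ∀ p ∈ P, E p ≠ ∞ := fun p _ => ne_top_of_le_ne_top ENNReal.one_ne_top (hE1 p)
  have hR01sum : R01 = ∑ p ∈ P, E p := by
    rw [hR01]
    refine Eq.trans (tsum_congr fun z => ?_) (Summable.tsum_finsetSum fun p _ => ENNReal.summable)
    by_cases hz : f z.1 = z.2
    · rw [if_neg (by simpa using hz)]
      symm
      refine Finset.sum_eq_zero fun p hp => ?_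
      rw [if_neg]
      rintro ⟨h1, h2⟩
      exact (Finset.mem_filter.mp hp).2 (by rw [← h1, ← h2, hz])
    · rw [if_pos hz]
      symm
      have hmem : (z.2, f z.1) ∈ P := by
        simp only [hPdef, Finset.mem_filter, Finset.mem_univ, true_and]
        exact fun h => hz h.symm
      rw [Finset.sum_eq_single_of_mem (z.2, f z.1) hmem (fun p _ hpne => by
        rw [if_neg]; rintro ⟨h1, h2⟩; exact hpne (Prod.ext h1.symm h2.symm))]
      exact if_pos ⟨rfl, rfl⟩
  have hCsum : C + R01 = 1 := by
    rw [hCdef, hR01, ← ENNReal.tsum_add]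
    refine Eq.trans (tsum_congr fun z => ?_) D.tsum_coe
    by_cases h : f z.1 = z.2 <;> simp [h]
  have hR01le1 : R01 ≤ 1 := hCsum ▸ le_add_self
  have hR01top : R01 ≠ ∞ := ne_top_of_le_ne_top ENNReal.one_ne_top hR01le1
  have hCeq : C = 1 - R01 := ENNReal.eq_sub_of_add_eq hR01top hCsum
  have hPcard : (P.card : ℝ≥0∞) ≤ (c : ℝ≥0∞) ^ 2 := by
    have h : P.card ≤ c ^ 2 := by
      calc P.card ≤ (Finset.univ : Finset (Y × Y)).card :=
            Finset.card_le_card (Finset.filter_subset _ _)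
        _ = c ^ 2 := by rw [Finset.card_univ, Fintype.card_prod, hc]; ring
    exact_mod_cast h
  have hpm : ∀ n : ℕ, 1 ≤ n → R01 ^ n ≤ (c : ℝ≥0∞) ^ (2 * n - 2) * ∑ p ∈ P, E p ^ n := by
    intro n hn
    rw [hR01sum]
    refine le_trans (ennreal_pow_sum_le P E hEne n hn) ?_
    refine mul_le_mul_left ?_ _
    calc (P.card : ℝ≥0∞) ^ (n - 1) ≤ ((c : ℝ≥0∞) ^ 2) ^ (n - 1) :=
          pow_le_pow_left₀ zero_le hPcard _
      _ = (c : ℝ≥0∞) ^ (2 * n - 2) := by rw [← pow_mul]; congr 1; omega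
  -- the M-bound
  have hMkey : ∑ p ∈ P, E p ^ M ≤ RP := by
    have h := key Finset.univ Finset.univ_nonempty (by
      intro w p hpP hall _
      have hpne := (Finset.mem_filter.mp hpP).2
      have h1 : (fun i : Fin M => f (w i).1) = fun _ => p.2 :=
        funext fun i => (hall i (Finset.mem_univ i)).2
      have h2 : (fun i : Fin M => (w i).2) = fun _ => p.1 :=
        funext fun i => (hall i (Finset.mem_univ i)).1
      rw [h1, h2]
      exact hσM p.2 p.1 fun hq => hpne hq.symm)
    simpa [Finset.card_univ] using h
  have hBM : R01 ^ M ≤ (c : ℝ≥0∞) ^ (2 * M - 2) * RP :=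
    le_trans (hpm M hM) (mul_le_mul_right hMkey _)
  have hMne : (M : ℝ) ≠ 0 := by positivity
  have hboundB : R01 ≤ B := by
    calc R01 = (R01 ^ (M : ℕ)) ^ ((M : ℝ)⁻¹) := by
          rw [← ENNReal.rpow_natCast R01 M, ← ENNReal.rpow_mul,
            mul_inv_cancel₀ hMne, ENNReal.rpow_one]
      _ ≤ B := ENNReal.rpow_le_rpow hBM (by positivity)
  -- the I-bound
  have hIkey : ∑ p ∈ P, E p ^ I * C ^ (M - I) ≤ RP := by
    have hIne : Isub.Nonempty := Finset.card_pos.mp (hIcard ▸ hI)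
    have h := key Isub hIne (by
      intro w p hpP hall hoff
      have hpne := (Finset.mem_filter.mp hpP).2
      have h1 : (fun i : Fin M => f (w i).1)
          = fun i => if i ∈ Isub then p.2 else (w i).2 := by
        funext i
        by_cases hi : i ∈ Isub
        · simp [hi, (hall i hi).2]
        · simp [hi, hoff i hi]
      rw [h1]
      exact hflip (fun i => (w i).2) p.1 p.2 (fun i hi => (hall i hi).1)
        fun hq => hpne hq.symm)
    rwa [hIcard] at h
  have h1B : (1 : ℝ≥0∞) - B ≤ C := by
    rw [hCeq]; exact tsub_le_tsub_left hboundB 1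
  have hden0 : (1 : ℝ≥0∞) - B ≠ 0 := by
    simpa [tsub_eq_zero_iff_le] using not_le.mpr hden
  have hdentop : (1 : ℝ≥0∞) - B ≠ ∞ := ne_top_of_le_ne_top ENNReal.one_ne_top tsub_le_self
  have hAI : R01 ^ I * ((1 : ℝ≥0∞) - B) ^ (M - I) ≤ RP * (c : ℝ≥0∞) ^ (2 * I - 2) := by
    calc R01 ^ I * ((1 : ℝ≥0∞) - B) ^ (M - I)
        ≤ ((c : ℝ≥0∞) ^ (2 * I - 2) * ∑ p ∈ P, E p ^ I) * C ^ (M - I) :=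
          mul_le_mul (hpm I hI) (pow_le_pow_left₀ zero_le h1B _) zero_le zero_le
      _ = (c : ℝ≥0∞) ^ (2 * I - 2) * ∑ p ∈ P, E p ^ I * C ^ (M - I) := by
          rw [mul_assoc, Finset.sum_mul]
      _ ≤ (c : ℝ≥0∞) ^ (2 * I - 2) * RP := mul_le_mul_right hIkey _
      _ = RP * (c : ℝ≥0∞) ^ (2 * I - 2) := mul_comm _ _
  have hIne0 : (I : ℝ) ≠ 0 := by positivity
  have hboundA : R01 ≤ (RP * (c : ℝ≥0∞) ^ (2 * I - 2)
      / ((1 : ℝ≥0∞) - B) ^ (M - I)) ^ ((I : ℝ)⁻¹) := by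
    have hdiv : R01 ^ I ≤ RP * (c : ℝ≥0∞) ^ (2 * I - 2) / ((1 : ℝ≥0∞) - B) ^ (M - I) :=
      (ENNReal.le_div_iff_mul_le (Or.inl (pow_ne_zero _ hden0))
        (Or.inl (ENNReal.pow_ne_top hdentop))).mpr hAI
    calc R01 = (R01 ^ (I : ℕ)) ^ ((I : ℝ)⁻¹) := by
          rw [← ENNReal.rpow_natCast R01 I, ← ENNReal.rpow_mul,
            mul_inv_cancel₀ hIne0, ENNReal.rpow_one]
      _ ≤ _ := ENNReal.rpow_le_rpow hdiv (by positivity)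
  exact le_min hboundA hboundB
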